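/- arXiv:1309.3983 — 5 statements merged into one kernel-verified Lean document; each statement's English description precedes it below -/
import Mathlib

section
/- Let X be a topological space, let f₀, f₁, f₂, … : X → ℝ be continuous functions converging pointwise to a function f : X → ℝ, and let U ⊆ ℝ be open. Then f⁻¹(U) is an Fσ set: there exists a sequence of closed sets F₀, F₁, F₂, … ⊆ X with f⁻¹(U) = ⋃_{k ∈ ℕ} F_k. -/
open Set Filter Topology

theorem stmt_4 {X : Type*} [TopologicalSpace X] (f : X → ℝ) (F : ℕ → X → ℝ)
    (hcont : ∀ m, Continuous (F m))
    (hconv : ∀ x : X, Tendsto (fun m => F m x) atTop (𝓝 (f x)))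
    (U : Set ℝ) (hU : IsOpen U) :
    ∃ C : ℕ → Set X, (∀ k, IsClosed (C k)) ∧ f ⁻¹' U = ⋃ k, C k := by
  by_cases hne : Uᶜ = ∅
  · refine ⟨fun _ => univ, fun _ => isClosed_univ, ?_⟩
    have : U = univ := by
      rw [← compl_empty_iff, hne]
    simp [this, iUnion_const]
  · have hUc : Uᶜ.Nonempty := nonempty_iff_ne_empty.2 hne
    have hcl : IsClosed Uᶜ := hU.isClosed_compl
    set g : ℝ → ℝ := fun y => Metric.infDist y Uᶜ with hg
    have hgcont : Continuous g := Metric.continuous_infDist_pt Uᶜ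
    have hmem : ∀ y : ℝ, y ∈ U ↔ 0 < g y := by
      intro y
      rw [← not_not (a := y ∈ U), ← mem_compl_iff,
        hcl.mem_iff_infDist_zero hUc]
      constructor
      · intro h
        exact lt_of_le_of_ne (Metric.infDist_nonneg) (Ne.symm h)
      · intro h h0
        exact absurd h0 (ne_of_gt h)
    refine ⟨fun k => ⋂ m, ⋂ (_ : (Nat.unpair k).2 ≤ m),
      {x | (1 : ℝ) / ((Nat.unpair k).1 + 1) ≤ g (F m x)}, ?_, ?_⟩
    · intro k
      refine isClosed_iInter fun m => isClosed_iInter fun _ => ?_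
      exact isClosed_le continuous_const (hgcont.comp (hcont m))
    · ext x
      simp only [mem_preimage, mem_iUnion, mem_iInter, mem_setOf_eq]
      constructor
      · intro hx
        have hpos : 0 < g (f x) := (hmem (f x)).1 hx
        obtain ⟨n, hn⟩ := exists_nat_one_div_lt (half_pos hpos)
        have hev : ∀ᶠ m in atTop, dist (F m x) (f x) < g (f x) / 2 :=
          (hconv x).eventually (Metric.ball_mem_nhds _ (half_pos hpos))
        obtain ⟨N, hN⟩ := hev.exists_forall_of_atTop
        refine ⟨Nat.pair n N, ?_⟩
        intro m hm
        rw [Nat.unpair_pair] at hm ⊢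
        have hd := hN m hm
        have hlip : g (f x) ≤ g (F m x) + dist (f x) (F m x) :=
          Metric.infDist_le_infDist_add_dist
        rw [dist_comm] at hd
        have : g (f x) / 2 ≤ g (F m x) := by linarith
        exact le_trans hn.le this
      · rintro ⟨k, hk⟩
        rw [hmem]
        have hge : (1 : ℝ) / ((Nat.unpair k).1 + 1) ≤ g (f x) := by
          refine ge_of_tendsto ((hgcont.tendsto _).comp (hconv x)) ?_
          filter_upwards [eventually_ge_atTop (Nat.unpair k).2] with m hm
          exact hk m hm
        have : (0 : ℝ) < 1 / ((Nat.unpair k).1 + 1) := by positivity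
        linarith
end

section
/- (Baire) Let f₀, f₁, f₂, … : ℝ → ℝ be continuous functions converging pointwise to a function f : ℝ → ℝ. Then the set of points at which f is discontinuous, {x ∈ ℝ : f is not continuous at x}, is meager. -/
open Filter Topology

set_option maxHeartbeats 800000

lemma isMeagre_of_nowhereDense {X : Type*} [TopologicalSpace X] {s : Set X}
    (hs : IsNowhereDense s) : IsMeagre s := by
  rw [isMeagre_iff_countable_union_isNowhereDense]
  exact ⟨{s}, by simpa using hs, Set.countable_singleton s, by simp⟩

lemma oscillation_meagre (f : ℝ → ℝ) (F : ℕ → ℝ → ℝ)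
    (hcont : ∀ n, Continuous (F n))
    (hconv : ∀ x : ℝ, Tendsto (fun n => F n x) atTop (𝓝 (f x)))
    (δ : ℝ) (hδ : 0 < δ) :
    IsMeagre {x : ℝ | ¬ ∀ᶠ y in 𝓝 x, dist (f y) (f x) ≤ 3 * δ} := by
  set A : ℕ → Set ℝ := fun N => ⋂ (m : ℕ) (n : ℕ),
    {x | dist (F (m + N) x) (F (n + N) x) ≤ δ} with hA
  have hAclosed : ∀ N, IsClosed (A N) := fun N =>
    isClosed_iInter fun m => isClosed_iInter fun n =>
      isClosed_le (((hcont _).dist (hcont _))) continuous_const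
  -- every point is in some A N
  have hcover : ∀ x : ℝ, ∃ N, x ∈ A N := by
    intro x
    obtain ⟨N, hN⟩ := (Metric.tendsto_atTop.mp (hconv x)) (δ / 2) (by linarith)
    refine ⟨N, ?_⟩
    simp only [hA, Set.mem_iInter, Set.mem_setOf_eq]
    intro m n
    have h1 := hN (m + N) (Nat.le_add_left _ _)
    have h2 := hN (n + N) (Nat.le_add_left _ _)
    calc dist (F (m + N) x) (F (n + N) x)
        ≤ dist (F (m + N) x) (f x) + dist (f x) (F (n + N) x) := dist_triangle _ _ _
      _ ≤ δ := by rw [dist_comm (f x)]; linarith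
  -- on A N, f is within δ of F N
  have hkey : ∀ N, ∀ y ∈ A N, dist (f y) (F N y) ≤ δ := by
    intro N y hy
    have hlim : Tendsto (fun m => dist (F (m + N) y) (F N y)) atTop
        (𝓝 (dist (f y) (F N y))) :=
      ((hconv y).comp (tendsto_add_atTop_nat N)).dist tendsto_const_nhds
    refine le_of_tendsto hlim (Eventually.of_forall fun m => ?_)
    have := Set.mem_iInter.mp (Set.mem_iInter.mp hy m) 0
    simpa using this
  have hsub : {x : ℝ | ¬ ∀ᶠ y in 𝓝 x, dist (f y) (f x) ≤ 3 * δ}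
      ⊆ ⋃ N, frontier (A N) := by
    intro x hx
    by_contra hxB
    simp only [Set.mem_iUnion, not_exists] at hxB
    obtain ⟨N, hN⟩ := hcover x
    have hxint : x ∈ interior (A N) := by
      have : x ∈ closure (A N) := subset_closure hN
      have := hxB N
      rw [frontier, Set.mem_diff, not_and, not_not] at this
      exact this ‹x ∈ closure (A N)›
    have hev1 : ∀ᶠ y in 𝓝 x, y ∈ A N :=
      eventually_of_mem (isOpen_interior.mem_nhds hxint) fun y hy => interior_subset hy
    have hev2 : ∀ᶠ y in 𝓝 x, dist (F N y) (F N x) < δ :=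
      Metric.tendsto_nhds.mp ((hcont N).continuousAt) δ hδ
    apply hx
    filter_upwards [hev1, hev2] with y hy1 hy2
    have h1 : dist (f y) (F N y) ≤ δ := hkey N y hy1
    have h3 : dist (f x) (F N x) ≤ δ := hkey N x hN
    calc dist (f y) (f x) ≤ dist (f y) (F N y) + dist (F N y) (F N x) + dist (F N x) (f x) :=
          dist_triangle4 _ _ _ _
      _ ≤ 3 * δ := by rw [dist_comm (F N x)]; linarith
  refine IsMeagre.mono hsub (isMeagre_iUnion fun N => ?_)
  exact isMeagre_of_nowhereDense
    (isClosed_frontier.isNowhereDense_iff.mpr (interior_frontier (hAclosed N)))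

theorem stmt_6 (f : ℝ → ℝ) (F : ℕ → ℝ → ℝ)
    (hcont : ∀ n, Continuous (F n))
    (hconv : ∀ x : ℝ, Tendsto (fun n => F n x) atTop (𝓝 (f x))) :
    IsMeagre {x : ℝ | ¬ ContinuousAt f x} := by
  have hsub : {x : ℝ | ¬ ContinuousAt f x} ⊆
      ⋃ k : ℕ, {x : ℝ | ¬ ∀ᶠ y in 𝓝 x, dist (f y) (f x) ≤ 3 * (1 / (k + 1 : ℝ))} := by
    intro x hx
    by_contra hxB
    simp only [Set.mem_iUnion, Set.mem_setOf_eq, not_exists, not_not] at hxB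
    apply hx
    rw [ContinuousAt, Metric.tendsto_nhds]
    intro ε hε
    obtain ⟨k, hk⟩ := exists_nat_one_div_lt (show (0:ℝ) < ε / 3 by linarith)
    filter_upwards [hxB k] with y hy
    calc dist (f y) (f x) ≤ 3 * (1 / (k + 1 : ℝ)) := hy
      _ < 3 * (ε / 3) := by
          apply mul_lt_mul_of_pos_left _ (by norm_num)
          exact_mod_cast hk
      _ = ε := by ring
  refine IsMeagre.mono hsub (isMeagre_iUnion fun k => ?_)
  exact oscillation_meagre f F hcont hconv _ (by positivity)
end

section
/- Let f : ℝ → ℝ be differentiable (everywhere). Then the set of points at which the derivative f′ is discontinuous, {x ∈ ℝ : f′ is not continuous at x}, is meager. -/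
open Filter Topology Set Metric

theorem stmt_8 (f : ℝ → ℝ) (hf : Differentiable ℝ f) :
    IsMeagre {x : ℝ | ¬ ContinuousAt (deriv f) x} := by
  set g : ℝ → ℝ := deriv f with hg
  -- approximating continuous functions
  set G : ℕ → ℝ → ℝ := fun n x => (f (x + 1/(n+1)) - f x) * (n+1) with hGdef
  have hfc : Continuous f := hf.continuous
  have hGcont : ∀ n, Continuous (G n) := by
    intro n
    exact ((hfc.comp (continuous_id.add continuous_const)).sub hfc).mul continuous_const
  have hGlim : ∀ x, Tendsto (fun n => G n x) atTop (𝓝 (g x)) := by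
    intro x
    have hd : HasDerivAt f (g x) x := (hf x).hasDerivAt
    rw [hasDerivAt_iff_tendsto_slope] at hd
    have hpos : ∀ n : ℕ, (0:ℝ) < 1/(n+1) := fun n => by positivity
    have h0 : Tendsto (fun n : ℕ => 1/((n:ℝ)+1)) atTop (𝓝 0) :=
      tendsto_one_div_add_atTop_nhds_zero_nat
    have h1 : Tendsto (fun n : ℕ => x + 1/((n:ℝ)+1)) atTop (𝓝[≠] x) := by
      rw [tendsto_nhdsWithin_iff]
      constructor
      · have := h0.const_add x
        simpa using this
      · exact Eventually.of_forall fun n => by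
          simp only [mem_compl_iff, mem_singleton_iff]
          intro h
          have := hpos n
          nlinarith [congrArg (fun t => t - x) h]
    have h2 := hd.comp h1
    refine h2.congr fun n => ?_
    simp only [Function.comp_apply, slope_def_field]
    simp only [hGdef]; rw [add_sub_cancel_left]; field_simp
  -- the closed sets of large oscillation
  set E : ℕ → Set ℝ := fun k =>
    {x | ∀ δ, 0 < δ → ∃ y ∈ ball x δ, ∃ z ∈ ball x δ, 1/((k:ℝ)+1) < |g y - g z|} with hEdef
  have hEclosed : ∀ k, IsClosed (E k) := by
    intro k
    rw [← isOpen_compl_iff, Metric.isOpen_iff]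
    intro x hx
    simp only [mem_compl_iff, hEdef, mem_setOf_eq, not_forall] at hx
    obtain ⟨δ, hδ⟩ := hx
    push_neg at hδ
    obtain ⟨hδ0, hδ⟩ := hδ
    refine ⟨δ/2, by linarith, fun x' hx' => ?_⟩
    simp only [mem_compl_iff, hEdef, mem_setOf_eq, not_forall]
    refine ⟨δ/2, ?_⟩
    push_neg
    refine ⟨by linarith, fun y hy z hz => ?_⟩
    have hsub : ball x' (δ/2) ⊆ ball x δ := by
      intro w hw
      rw [mem_ball] at *
      calc dist w x ≤ dist w x' + dist x' x := dist_triangle _ _ _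
        _ < δ/2 + δ/2 := by linarith
        _ = δ := by ring
    exact hδ y (hsub hy) z (hsub hz)
  -- each E k has empty interior
  have hEnd : ∀ k, interior (E k) = ∅ := by
    intro k
    by_contra hne
    have hne' : (interior (E k)).Nonempty := nonempty_iff_ne_empty.mpr hne
    set ε : ℝ := 1/((k:ℝ)+1) with hε
    have hε0 : 0 < ε := by positivity
    set A : ℕ → Set ℝ := fun N => {x | ∀ m, N ≤ m → ∀ n, N ≤ n → |G m x - G n x| ≤ ε/4}
      with hAdef
    have hAclosed : ∀ N, IsClosed (A N) := by
      intro N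
      have : A N = ⋂ m, ⋂ (_ : N ≤ m), ⋂ n, ⋂ (_ : N ≤ n), {x | |G m x - G n x| ≤ ε/4} := by
        ext x; simp [hAdef]
      rw [this]
      refine isClosed_iInter fun m => isClosed_iInter fun _ =>
        isClosed_iInter fun n => isClosed_iInter fun _ => ?_
      exact isClosed_le (((hGcont m).sub (hGcont n)).abs) continuous_const
    have hAcover : (⋃ N, A N) = univ := by
      refine eq_univ_of_forall fun x => ?_
      have hc : CauchySeq (fun n => G n x) := (hGlim x).cauchySeq
      rw [Metric.cauchySeq_iff'] at hc
      obtain ⟨N, hN⟩ := hc (ε/8) (by positivity)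
      refine mem_iUnion.mpr ⟨N, fun m hm n hn => ?_⟩
      have h1 := hN m hm
      have h2 := hN n hn
      rw [Real.dist_eq] at h1 h2
      have : |G m x - G n x| ≤ |G m x - G N x| + |G N x - G n x| := abs_sub_le _ _ _
      rw [abs_sub_comm (G N x) (G n x)] at this
      linarith
    have hdense : Dense (⋃ N, interior (A N)) :=
      dense_iUnion_interior_of_closed hAclosed hAcover
    obtain ⟨q, hqA, hqE⟩ := hdense.exists_mem_open isOpen_interior hne'
    obtain ⟨N, hN⟩ := mem_iUnion.mp hqA
    obtain ⟨δ1, hδ1, hball1⟩ := Metric.mem_nhds_iff.mp (mem_interior_iff_mem_nhds.mp hN)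
    -- on ball q δ1, |G N x - g x| ≤ ε/4
    have hclose : ∀ x ∈ ball q δ1, |g x - G N x| ≤ ε/4 := by
      intro x hx
      have hx' : x ∈ A N := hball1 hx
      have htd : Tendsto (fun m => |G m x - G N x|) atTop (𝓝 |g x - G N x|) :=
        (((hGlim x).sub tendsto_const_nhds).abs)
      refine le_of_tendsto htd ?_
      filter_upwards [eventually_ge_atTop N] with m hm
      exact hx' m hm N le_rfl
    -- continuity of G N at q
    obtain ⟨δ2, hδ2, hcont⟩ := Metric.continuousAt_iff.mp (hGcont N).continuousAt (ε/4)
      (by positivity)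
    have hqEk : q ∈ E k := interior_subset hqE
    obtain ⟨y, hy, z, hz, hyz⟩ := hqEk (min δ1 δ2) (lt_min hδ1 hδ2)
    have hy1 : y ∈ ball q δ1 := ball_subset_ball (min_le_left _ _) hy
    have hz1 : z ∈ ball q δ1 := ball_subset_ball (min_le_left _ _) hz
    have hy2 : dist y q < δ2 := lt_of_lt_of_le (mem_ball.mp hy) (min_le_right _ _)
    have hz2 : dist z q < δ2 := lt_of_lt_of_le (mem_ball.mp hz) (min_le_right _ _)
    have t1 : |g y - G N y| ≤ ε/4 := by
      have := hclose y hy1; rwa [abs_sub_comm] at this ⊢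
    have t4 : |G N z - g z| ≤ ε/4 := by
      have := hclose z hz1; rwa [abs_sub_comm] at this
    have t2 : |G N y - G N q| < ε/4 := by
      have := hcont hy2; rwa [Real.dist_eq] at this
    have t3 : |G N q - G N z| < ε/4 := by
      have := hcont hz2; rw [Real.dist_eq] at this; rwa [abs_sub_comm]
    have h1 : |g y - g z| ≤ |g y - G N y| + |G N y - g z| := abs_sub_le _ _ _
    have h2 : |G N y - g z| ≤ |G N y - G N z| + |G N z - g z| := abs_sub_le _ _ _
    have h3 : |G N y - G N z| ≤ |G N y - G N q| + |G N q - G N z| := abs_sub_le _ _ _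
    have : |g y - g z| ≤ ε := by
      have := hε0; linarith
    linarith
  -- discontinuity set is contained in the union of the E k
  have hsub : {x : ℝ | ¬ ContinuousAt g x} ⊆ ⋃ k, E k := by
    intro x hx
    by_contra hco
    simp only [mem_iUnion, not_exists] at hco
    apply hx
    rw [Metric.continuousAt_iff]
    intro ε hε
    obtain ⟨k, hk⟩ : ∃ k : ℕ, 1/((k:ℝ)+1) < ε := by
      obtain ⟨k, hk⟩ := exists_nat_one_div_lt hε
      exact ⟨k, hk⟩
    have hxk := hco k
    simp only [hEdef, mem_setOf_eq, not_forall] at hxk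
    obtain ⟨δ, hδ⟩ := hxk
    push_neg at hδ
    obtain ⟨hδ0, hδ⟩ := hδ
    refine ⟨δ, hδ0, fun {y} hy => ?_⟩
    have hxx : x ∈ ball x δ := mem_ball_self hδ0
    have hyb : y ∈ ball x δ := by rwa [mem_ball]
    have := hδ y hyb x hxx
    rw [Real.dist_eq]
    exact lt_of_le_of_lt this hk
  -- conclude
  have hmeag : IsMeagre (⋃ k, E k) := by
    refine isMeagre_iUnion fun k => ?_
    rw [isMeagre_iff_countable_union_isNowhereDense]
    refine ⟨{E k}, ?_, countable_singleton _, by simp⟩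
    intro t ht
    rw [mem_singleton_iff] at ht
    subst ht
    exact (hEclosed k).isNowhereDense_iff.mpr (hEnd k)
  exact hmeag.mono hsub
end

section
/- For every closed set V ⊆ ℝ there exists a differentiable function f : ℝ → ℝ such that the derivative f′ is discontinuous at every point of V \ interior(V) (that is, at every point of the frontier of V). -/
open Set Real Filter


noncomputable def hfun (t : ℝ) : ℝ := t ^ 2 * Real.sin t⁻¹

lemma hfun_zero : hfun 0 = 0 := by simp [hfun]

lemma abs_hfun_le (t : ℝ) : |hfun t| ≤ t ^ 2 := by
  rw [hfun, abs_mul, abs_pow, sq_abs]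
  calc t ^ 2 * |Real.sin t⁻¹| ≤ t ^ 2 * 1 :=
          mul_le_mul_of_nonneg_left (abs_sin_le_one t⁻¹) (sq_nonneg t)
    _ = t ^ 2 := mul_one _

lemma hasDerivAt_hfun {t : ℝ} (ht : t ≠ 0) :
    HasDerivAt hfun (2 * t * Real.sin t⁻¹ - Real.cos t⁻¹) t := by
  have h1 : HasDerivAt (fun s : ℝ => s ^ 2) (2 * t) t := by
    simpa using hasDerivAt_pow 2 t
  have h2 : HasDerivAt (fun s : ℝ => Real.sin s⁻¹) (Real.cos t⁻¹ * -(t ^ 2)⁻¹) t :=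
    (Real.hasDerivAt_sin t⁻¹).comp t (hasDerivAt_inv ht)
  have := h1.mul h2
  refine this.congr_deriv ?_
  field_simp
  ring



noncomputable def Af (V : Set ℝ) (x : ℝ) : ℝ := sSup (V ∩ Set.Iic x)
noncomputable def Bf (V : Set ℝ) (x : ℝ) : ℝ := sInf (V ∩ Set.Ici x)

open Classical in
noncomputable def df (V : Set ℝ) (x : ℝ) : ℝ :=
  if (V ∩ Set.Iic x).Nonempty then
    if (V ∩ Set.Ici x).Nonempty then
      (x - Af V x) * (Bf V x - x) / (Bf V x - Af V x)
    else x - Af V x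
  else if (V ∩ Set.Ici x).Nonempty then Bf V x - x else 0

lemma bddAbove_VIic (V : Set ℝ) (x : ℝ) : BddAbove (V ∩ Set.Iic x) :=
  ⟨x, fun v hv => hv.2⟩

lemma bddBelow_VIci (V : Set ℝ) (x : ℝ) : BddBelow (V ∩ Set.Ici x) :=
  ⟨x, fun v hv => hv.2⟩

lemma Af_le (V : Set ℝ) {x : ℝ} (h : (V ∩ Set.Iic x).Nonempty) : Af V x ≤ x :=
  csSup_le h (fun v hv => hv.2)

lemma le_Bf (V : Set ℝ) {x : ℝ} (h : (V ∩ Set.Ici x).Nonempty) : x ≤ Bf V x :=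
  le_csInf h (fun v hv => hv.2)

lemma df_nonneg (V : Set ℝ) (x : ℝ) : 0 ≤ df V x := by
  rw [df]
  split_ifs with h1 h2 h2
  · have ha := Af_le V h1
    have hb := le_Bf V h2
    apply div_nonneg (mul_nonneg (by linarith) (by linarith)) (by linarith)
  · linarith [Af_le V h1]
  · linarith [le_Bf V h2]
  · exact le_refl 0

lemma df_le_of_mem_le (V : Set ℝ) {x y : ℝ} (hx : x ∈ V) (hxy : x ≤ y) :
    df V y ≤ y - x := by
  have h1 : (V ∩ Set.Iic y).Nonempty := ⟨x, hx, hxy⟩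
  have hxa : x ≤ Af V y := le_csSup (bddAbove_VIic V y) ⟨hx, hxy⟩
  have ha := Af_le V h1
  rw [df, if_pos h1]
  split_ifs with h2
  · have hb := le_Bf V h2
    rcases eq_or_lt_of_le (ha.trans hb) with he | hlt
    · rw [← he]
      simp
      linarith
    · rw [div_le_iff₀ (by linarith)]
      calc (y - Af V y) * (Bf V y - y) ≤ (y - x) * (Bf V y - Af V y) := by nlinarith
        _ = (y - x) * (Bf V y - Af V y) := rfl
  · linarith

lemma df_le_of_mem_ge (V : Set ℝ) {x y : ℝ} (hx : x ∈ V) (hxy : y ≤ x) :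
    df V y ≤ x - y := by
  have h2 : (V ∩ Set.Ici y).Nonempty := ⟨x, hx, hxy⟩
  have hxb : Bf V y ≤ x := csInf_le (bddBelow_VIci V y) ⟨hx, hxy⟩
  have hb := le_Bf V h2
  rw [df]
  split_ifs with h1
  · have ha := Af_le V h1
    rcases eq_or_lt_of_le (ha.trans hb) with he | hlt
    · rw [← he]; simp; linarith
    · rw [div_le_iff₀ (by linarith)]
      nlinarith
  · linarith

lemma df_le_abs (V : Set ℝ) {x : ℝ} (hx : x ∈ V) (y : ℝ) : df V y ≤ |y - x| := by
  rcases le_total x y with h | h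
  · rw [abs_of_nonneg (by linarith)]; exact df_le_of_mem_le V hx h
  · rw [abs_of_nonpos (by linarith)]
    have := df_le_of_mem_ge V hx h
    linarith

lemma df_mem (V : Set ℝ) {x : ℝ} (hx : x ∈ V) : df V x = 0 :=
  le_antisymm (by simpa using df_le_abs V hx x) (df_nonneg V x)




lemma df_eq_Ioo (V : Set ℝ) {a b : ℝ} (ha : a ∈ V) (hb : b ∈ V)
    (hE : Set.Ioo a b ∩ V = ∅) {w : ℝ} (hw : w ∈ Set.Ioo a b) :
    df V w = (w - a) * (b - w) / (b - a) := by
  have h1 : (V ∩ Set.Iic w).Nonempty := ⟨a, ha, hw.1.le⟩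
  have h2 : (V ∩ Set.Ici w).Nonempty := ⟨b, hb, hw.2.le⟩
  have hA : Af V w = a := by
    apply IsGreatest.csSup_eq
    refine ⟨⟨ha, hw.1.le⟩, ?_⟩
    rintro v ⟨hv, hvw⟩
    by_contra hlt
    push_neg at hlt
    have : v ∈ Set.Ioo a b ∩ V := ⟨⟨hlt, lt_of_le_of_lt hvw hw.2⟩, hv⟩
    rw [hE] at this
    exact this
  have hB : Bf V w = b := by
    apply IsLeast.csInf_eq
    refine ⟨⟨hb, hw.2.le⟩, ?_⟩
    rintro v ⟨hv, hvw⟩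
    by_contra hlt
    push_neg at hlt
    have : v ∈ Set.Ioo a b ∩ V := ⟨⟨lt_of_lt_of_le hw.1 hvw, hlt⟩, hv⟩
    rw [hE] at this
    exact this
  rw [df, if_pos h1, if_pos h2, hA, hB]

lemma df_eq_Ioi (V : Set ℝ) {a : ℝ} (ha : a ∈ V) (hE : Set.Ioi a ∩ V = ∅)
    {w : ℝ} (hw : a < w) : df V w = w - a := by
  have h1 : (V ∩ Set.Iic w).Nonempty := ⟨a, ha, hw.le⟩
  have h2 : ¬(V ∩ Set.Ici w).Nonempty := by
    rintro ⟨v, hv, hvw⟩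
    have : v ∈ Set.Ioi a ∩ V := ⟨lt_of_lt_of_le hw hvw, hv⟩
    rw [hE] at this; exact this
  have hA : Af V w = a := by
    apply IsGreatest.csSup_eq
    refine ⟨⟨ha, hw.le⟩, ?_⟩
    rintro v ⟨hv, hvw⟩
    by_contra hlt
    push_neg at hlt
    have : v ∈ Set.Ioi a ∩ V := ⟨hlt, hv⟩
    rw [hE] at this; exact this
  rw [df, if_pos h1, if_neg h2, hA]

lemma df_eq_Iio (V : Set ℝ) {b : ℝ} (hb : b ∈ V) (hE : Set.Iio b ∩ V = ∅)
    {w : ℝ} (hw : w < b) : df V w = b - w := by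
  have h2 : (V ∩ Set.Ici w).Nonempty := ⟨b, hb, hw.le⟩
  have h1 : ¬(V ∩ Set.Iic w).Nonempty := by
    rintro ⟨v, hv, hvw⟩
    have : v ∈ Set.Iio b ∩ V := ⟨lt_of_le_of_lt hvw hw, hv⟩
    rw [hE] at this; exact this
  have hB : Bf V w = b := by
    apply IsLeast.csInf_eq
    refine ⟨⟨hb, hw.le⟩, ?_⟩
    rintro v ⟨hv, hvw⟩
    by_contra hlt
    push_neg at hlt
    have : v ∈ Set.Iio b ∩ V := ⟨hlt, hv⟩
    rw [hE] at this; exact this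
  rw [df, if_neg h1, if_pos h2, hB]

lemma df_eq_empty (V : Set ℝ) (hV : V = ∅) (w : ℝ) : df V w = 0 := by
  simp [df, hV]




noncomputable def ff (V : Set ℝ) (x : ℝ) : ℝ := hfun (df V x)

lemma ff_def (V : Set ℝ) (x : ℝ) : ff V x = hfun (df V x) := rfl

lemma hasDerivAt_ff_Ioo (V : Set ℝ) {a b : ℝ} (ha : a ∈ V) (hb : b ∈ V)
    (hE : Set.Ioo a b ∩ V = ∅) {z : ℝ} (hz : z ∈ Set.Ioo a b) :
    HasDerivAt (ff V)
      ((2 * ((z - a) * (b - z) / (b - a)) * Real.sin ((z - a) * (b - z) / (b - a))⁻¹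
        - Real.cos ((z - a) * (b - z) / (b - a))⁻¹) * ((a + b - 2 * z) / (b - a))) z := by
  have hab : a < b := lt_trans hz.1 hz.2
  set p : ℝ → ℝ := fun w => (w - a) * (b - w) / (b - a) with hp
  have hpz : 0 < p z := by
    apply div_pos (mul_pos (by linarith [hz.1]) (by linarith [hz.2])) (by linarith)
  have hinner : HasDerivAt p ((a + b - 2 * z) / (b - a)) z := by
    have h1 : HasDerivAt (fun w : ℝ => (w - a) * (b - w)) (1 * (b - z) + (z - a) * (0 - 1)) z :=
      ((hasDerivAt_id z).sub_const a).mul ((hasDerivAt_const z b).sub (hasDerivAt_id z))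
    have := h1.div_const (b - a)
    refine this.congr_deriv ?_
    ring
  have hcomp : HasDerivAt (fun w => hfun (p w))
      ((2 * p z * Real.sin (p z)⁻¹ - Real.cos (p z)⁻¹) * ((a + b - 2 * z) / (b - a))) z :=
    (hasDerivAt_hfun (ne_of_gt hpz)).comp z hinner
  apply hcomp.congr_of_eventuallyEq
  filter_upwards [isOpen_Ioo.mem_nhds hz] with w hw
  rw [ff, df_eq_Ioo V ha hb hE hw]

lemma hasDerivAt_ff_Ioi (V : Set ℝ) {a : ℝ} (ha : a ∈ V) (hE : Set.Ioi a ∩ V = ∅)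
    {z : ℝ} (hz : a < z) :
    HasDerivAt (ff V) (2 * (z - a) * Real.sin (z - a)⁻¹ - Real.cos (z - a)⁻¹) z := by
  have hinner : HasDerivAt (fun w : ℝ => w - a) 1 z := (hasDerivAt_id z).sub_const a
  have hcomp : HasDerivAt (fun w => hfun (w - a))
      ((2 * (z - a) * Real.sin (z - a)⁻¹ - Real.cos (z - a)⁻¹) * 1) z :=
    by have h := (hasDerivAt_hfun (by linarith : z - a ≠ 0)).comp z hinner; exact h
  rw [mul_one] at hcomp
  apply hcomp.congr_of_eventuallyEq
  filter_upwards [isOpen_Ioi.mem_nhds hz] with w hw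
  rw [ff, df_eq_Ioi V ha hE hw]

lemma hasDerivAt_ff_Iio (V : Set ℝ) {b : ℝ} (hb : b ∈ V) (hE : Set.Iio b ∩ V = ∅)
    {z : ℝ} (hz : z < b) :
    HasDerivAt (ff V) (-(2 * (b - z) * Real.sin (b - z)⁻¹ - Real.cos (b - z)⁻¹)) z := by
  have hinner : HasDerivAt (fun w : ℝ => b - w) (0 - 1) z :=
    (hasDerivAt_const z b).sub (hasDerivAt_id z)
  have hcomp : HasDerivAt (fun w => hfun (b - w))
      ((2 * (b - z) * Real.sin (b - z)⁻¹ - Real.cos (b - z)⁻¹) * (0 - 1)) z :=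
    (hasDerivAt_hfun (by intro h; linarith [sub_eq_zero.mp h] : b - z ≠ 0)).comp z hinner
  have : (2 * (b - z) * Real.sin (b - z)⁻¹ - Real.cos (b - z)⁻¹) * (0 - 1)
      = -(2 * (b - z) * Real.sin (b - z)⁻¹ - Real.cos (b - z)⁻¹) := by ring
  rw [this] at hcomp
  apply hcomp.congr_of_eventuallyEq
  filter_upwards [isOpen_Iio.mem_nhds hz] with w hw
  rw [ff, df_eq_Iio V hb hE hw]




lemma abs_ff_le (V : Set ℝ) {x : ℝ} (hx : x ∈ V) (y : ℝ) : |ff V y| ≤ (y - x) ^ 2 := by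
  calc |ff V y| ≤ (df V y) ^ 2 := abs_hfun_le _
    _ ≤ |y - x| ^ 2 := by
        apply sq_le_sq'
        · linarith [df_nonneg V y, abs_nonneg (y - x)]
        · exact df_le_abs V hx y
    _ = (y - x) ^ 2 := sq_abs _

lemma hasDerivAt_ff_mem (V : Set ℝ) {x : ℝ} (hx : x ∈ V) : HasDerivAt (ff V) 0 x := by
  have hfx : ff V x = 0 := by rw [ff, df_mem V hx, hfun_zero]
  rw [hasDerivAt_iff_tendsto_slope]
  have h0 : Tendsto (fun y : ℝ => |y - x|) (nhdsWithin x {x}ᶜ) (nhds 0) := by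
    have : Tendsto (fun y : ℝ => |y - x|) (nhds x) (nhds 0) := by
      have : ContinuousAt (fun y : ℝ => |y - x|) x := by fun_prop
      simpa using this.tendsto
    exact this.mono_left nhdsWithin_le_nhds
  apply squeeze_zero_norm' _ h0
  filter_upwards [self_mem_nhdsWithin] with y hy
  have hyx : y ≠ x := hy
  rw [slope_def_field, hfx, sub_zero]
  rw [norm_div]
  rw [div_le_iff₀ (by simpa [sub_eq_zero] using hyx : (0:ℝ) < ‖y - x‖)]
  calc ‖ff V y‖ ≤ (y - x) ^ 2 := abs_ff_le V hx y
    _ = |y - x| * ‖y - x‖ := by rw [← sq_abs, Real.norm_eq_abs]; ring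


lemma left_endpoint (V : Set ℝ) (hV : IsClosed V) {y : ℝ} (hy : y ∉ V)
    (h1 : (V ∩ Set.Iic y).Nonempty) :
    Af V y ∈ V ∧ Af V y < y ∧ Set.Ioc (Af V y) y ∩ V = ∅ := by
  have hmem : Af V y ∈ V ∩ Set.Iic y :=
    (hV.inter isClosed_Iic).csSup_mem h1 (bddAbove_VIic V y)
  have haV : Af V y ∈ V := hmem.1
  have hlt : Af V y < y := lt_of_le_of_ne hmem.2 (fun h => hy (h ▸ haV))
  refine ⟨haV, hlt, ?_⟩
  ext v
  simp only [Set.mem_inter_iff, Set.mem_Ioc, Set.mem_empty_iff_false, iff_false, not_and]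
  rintro ⟨hva, hvy⟩ hv
  exact absurd (le_csSup (bddAbove_VIic V y) ⟨hv, hvy⟩) (not_le.mpr hva)

lemma right_endpoint (V : Set ℝ) (hV : IsClosed V) {y : ℝ} (hy : y ∉ V)
    (h2 : (V ∩ Set.Ici y).Nonempty) :
    Bf V y ∈ V ∧ y < Bf V y ∧ Set.Ico y (Bf V y) ∩ V = ∅ := by
  have hmem : Bf V y ∈ V ∩ Set.Ici y :=
    (hV.inter isClosed_Ici).csInf_mem h2 (bddBelow_VIci V y)
  have hbV : Bf V y ∈ V := hmem.1
  have hlt : y < Bf V y := lt_of_le_of_ne hmem.2 (fun h => hy (h ▸ hbV))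
  refine ⟨hbV, hlt, ?_⟩
  ext v
  simp only [Set.mem_inter_iff, Set.mem_Ico, Set.mem_empty_iff_false, iff_false, not_and]
  rintro ⟨hvy, hvb⟩ hv
  exact absurd (csInf_le (bddBelow_VIci V y) ⟨hv, hvy⟩) (not_le.mpr hvb)

lemma diff_ff (V : Set ℝ) (hV : IsClosed V) : Differentiable ℝ (ff V) := by
  intro y
  by_cases hy : y ∈ V
  · exact (hasDerivAt_ff_mem V hy).differentiableAt
  by_cases h1 : (V ∩ Set.Iic y).Nonempty
  · obtain ⟨haV, hay, hEa⟩ := left_endpoint V hV hy h1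
    by_cases h2 : (V ∩ Set.Ici y).Nonempty
    · obtain ⟨hbV, hyb, hEb⟩ := right_endpoint V hV hy h2
      have hE : Set.Ioo (Af V y) (Bf V y) ∩ V = ∅ := by
        ext v
        simp only [Set.mem_inter_iff, Set.mem_Ioo, Set.mem_empty_iff_false, iff_false, not_and]
        rintro ⟨hva, hvb⟩ hv
        rcases le_or_gt v y with h | h
        · have : v ∈ Set.Ioc (Af V y) y ∩ V := ⟨⟨hva, h⟩, hv⟩
          rw [hEa] at this; exact this
        · have : v ∈ Set.Ico y (Bf V y) ∩ V := ⟨⟨h.le, hvb⟩, hv⟩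
          rw [hEb] at this; exact this
      exact (hasDerivAt_ff_Ioo V haV hbV hE ⟨hay, hyb⟩).differentiableAt
    · have hE : Set.Ioi (Af V y) ∩ V = ∅ := by
        ext v
        simp only [Set.mem_inter_iff, Set.mem_Ioi, Set.mem_empty_iff_false, iff_false, not_and]
        intro hva hv
        rcases le_or_gt v y with h | h
        · have : v ∈ Set.Ioc (Af V y) y ∩ V := ⟨⟨hva, h⟩, hv⟩
          rw [hEa] at this; exact this
        · exact h2 ⟨v, hv, h.le⟩
      exact (hasDerivAt_ff_Ioi V haV hE hay).differentiableAt
  by_cases h2 : (V ∩ Set.Ici y).Nonempty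
  · obtain ⟨hbV, hyb, hEb⟩ := right_endpoint V hV hy h2
    have hE : Set.Iio (Bf V y) ∩ V = ∅ := by
      ext v
      simp only [Set.mem_inter_iff, Set.mem_Iio, Set.mem_empty_iff_false, iff_false, not_and]
      intro hvb hv
      rcases lt_or_ge v y with h | h
      · exact h1 ⟨v, hv, h.le⟩
      · have : v ∈ Set.Ico y (Bf V y) ∩ V := ⟨⟨h, hvb⟩, hv⟩
        rw [hEb] at this; exact this
    exact (hasDerivAt_ff_Iio V hbV hE hyb).differentiableAt
  · have hVe : V = ∅ := by
      ext v
      simp only [Set.mem_empty_iff_false, iff_false]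
      intro hv
      rcases le_total v y with h | h
      · exact h1 ⟨v, hv, h⟩
      · exact h2 ⟨v, hv, h⟩
    have : ff V = fun _ => 0 := by
      funext w
      rw [ff_def, df_eq_empty V hVe, hfun_zero]
    rw [this]
    exact differentiableAt_const 0


lemma exists_small_inv {X : ℝ} (hX : 0 < X) :
    ∃ k : ℕ, 0 < (((k:ℝ) * (2 * π)))⁻¹ ∧ (((k:ℝ) * (2 * π)))⁻¹ < X := by
  have hπ := Real.pi_pos
  obtain ⟨k, hk⟩ := exists_nat_gt (X⁻¹ / (2 * π))
  have h1 : X⁻¹ < (k:ℝ) * (2 * π) := by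
    rw [div_lt_iff₀ (by positivity)] at hk
    linarith
  have h2 : 0 < (k:ℝ) * (2 * π) := lt_trans (by positivity) h1
  refine ⟨k, by positivity, ?_⟩
  rw [inv_lt_comm₀ h2 hX]
  exact h1

lemma sin_inv_special (k : ℕ) : Real.sin ((((k:ℝ) * (2 * π)))⁻¹)⁻¹ = 0 := by
  rw [inv_inv]
  have := Real.sin_add_nat_mul_two_pi 0 k
  simpa using this

lemma cos_inv_special (k : ℕ) : Real.cos ((((k:ℝ) * (2 * π)))⁻¹)⁻¹ = 1 := by
  rw [inv_inv]
  exact Real.cos_nat_mul_two_pi k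

lemma osc_right (V : Set ℝ) (hV : IsClosed V) {a y ε : ℝ} (ha : a ∈ V) (hay : a < y)
    (hE : Set.Ioc a y ∩ V = ∅) (hε : 0 < ε) :
    ∃ z, a < z ∧ z - a < ε ∧ deriv (ff V) z ≤ -(1/2) := by
  have hyV : y ∉ V := by
    intro h
    have : y ∈ Set.Ioc a y ∩ V := ⟨⟨hay, le_refl y⟩, h⟩
    rw [hE] at this; exact this
  by_cases h2 : (V ∩ Set.Ici y).Nonempty
  · obtain ⟨hbV, hyb, hEb⟩ := right_endpoint V hV hyV h2
    set b := Bf V y with hbdef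
    have hab : a < b := lt_trans hay hyb
    have hE2 : Set.Ioo a b ∩ V = ∅ := by
      ext v
      simp only [Set.mem_inter_iff, Set.mem_Ioo, Set.mem_empty_iff_false, iff_false, not_and]
      rintro ⟨hva, hvb⟩ hv
      rcases le_or_gt v y with h | h
      · have : v ∈ Set.Ioc a y ∩ V := ⟨⟨hva, h⟩, hv⟩
        rw [hE] at this; exact this
      · have : v ∈ Set.Ico y b ∩ V := ⟨⟨h.le, hvb⟩, hv⟩
        rw [hEb] at this; exact this
    set m := min ε (b - a) with hmdef
    have hm : 0 < m := lt_min hε (by linarith)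
    have hm2 : m ≤ b - a := min_le_right _ _
    have hm3 : m ≤ ε := min_le_left _ _
    set c := a + m / 8 with hcdef
    have hca : a < c := by rw [hcdef]; linarith
    have hcb : c < b := by rw [hcdef]; linarith
    have hpc : 0 < (c - a) * (b - c) / (b - a) :=
      div_pos (mul_pos (by linarith) (by linarith)) (by linarith)
    obtain ⟨k, hk0, hkc⟩ := exists_small_inv hpc
    set t := (((k:ℝ) * (2 * π)))⁻¹ with htdef
    have hcont : ContinuousOn (fun w => (w - a) * (b - w) / (b - a)) (Set.Icc a c) :=
      (((continuous_id.sub continuous_const).mul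
        (continuous_const.sub continuous_id)).div_const (b - a)).continuousOn
    have htmem : t ∈ Set.Icc ((a - a) * (b - a) / (b - a)) ((c - a) * (b - c) / (b - a)) := by
      constructor
      · simp only [sub_self, zero_mul, zero_div]
        exact hk0.le
      · exact hkc.le
    obtain ⟨z, hz, hpz⟩ := intermediate_value_Icc hca.le hcont htmem
    have hpz' : (z - a) * (b - z) / (b - a) = t := hpz
    have hza : a < z := by
      rcases eq_or_lt_of_le hz.1 with h | h
      · exfalso
        rw [← h] at hpz'
        simp only [sub_self, zero_mul, zero_div] at hpz'
        exact absurd hpz'.symm (ne_of_gt hk0)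
      · exact h
    have hzb : z < b := lt_of_le_of_lt hz.2 hcb
    have hda := (hasDerivAt_ff_Ioo V ha hbV hE2 ⟨hza, hzb⟩).deriv
    rw [hpz', sin_inv_special, cos_inv_special] at hda
    have hq : (1:ℝ)/2 ≤ (a + b - 2 * z) / (b - a) := by
      rw [le_div_iff₀ (by linarith)]
      have hzc : z ≤ c := hz.2
      rw [hcdef] at hzc
      linarith
    refine ⟨z, hza, ?_, ?_⟩
    · have hzc : z ≤ c := hz.2
      rw [hcdef] at hzc
      linarith
    · have : deriv (ff V) z = -((a + b - 2 * z) / (b - a)) := by rw [hda]; ring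
      rw [this]
      linarith
  · have hE2 : Set.Ioi a ∩ V = ∅ := by
      ext v
      simp only [Set.mem_inter_iff, Set.mem_Ioi, Set.mem_empty_iff_false, iff_false, not_and]
      intro hva hv
      rcases le_or_gt v y with h | h
      · have : v ∈ Set.Ioc a y ∩ V := ⟨⟨hva, h⟩, hv⟩
        rw [hE] at this; exact this
      · exact h2 ⟨v, hv, h.le⟩
    obtain ⟨k, hk0, hkε⟩ := exists_small_inv hε
    set t := (((k:ℝ) * (2 * π)))⁻¹ with htdef
    refine ⟨a + t, by linarith, by simp only [add_sub_cancel_left]; exact hkε, ?_⟩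
    have hda := (hasDerivAt_ff_Ioi V ha hE2 (show a < a + t by linarith)).deriv
    rw [add_sub_cancel_left, sin_inv_special, cos_inv_special] at hda
    rw [hda]
    norm_num

lemma osc_left (V : Set ℝ) (hV : IsClosed V) {b y ε : ℝ} (hb : b ∈ V) (hyb : y < b)
    (hE : Set.Ico y b ∩ V = ∅) (hε : 0 < ε) :
    ∃ z, z < b ∧ b - z < ε ∧ (1/2 : ℝ) ≤ deriv (ff V) z := by
  have hyV : y ∉ V := by
    intro h
    have : y ∈ Set.Ico y b ∩ V := ⟨⟨le_refl y, hyb⟩, h⟩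
    rw [hE] at this; exact this
  by_cases h1 : (V ∩ Set.Iic y).Nonempty
  · obtain ⟨haV, hay, hEa⟩ := left_endpoint V hV hyV h1
    set a := Af V y with hadef
    have hab : a < b := lt_trans hay hyb
    have hE2 : Set.Ioo a b ∩ V = ∅ := by
      ext v
      simp only [Set.mem_inter_iff, Set.mem_Ioo, Set.mem_empty_iff_false, iff_false, not_and]
      rintro ⟨hva, hvb⟩ hv
      rcases le_or_gt v y with h | h
      · have : v ∈ Set.Ioc a y ∩ V := ⟨⟨hva, h⟩, hv⟩
        rw [hEa] at this; exact this
      · have : v ∈ Set.Ico y b ∩ V := ⟨⟨h.le, hvb⟩, hv⟩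
        rw [hE] at this; exact this
    set m := min ε (b - a) with hmdef
    have hm : 0 < m := lt_min hε (by linarith)
    have hm2 : m ≤ b - a := min_le_right _ _
    have hm3 : m ≤ ε := min_le_left _ _
    set c := b - m / 8 with hcdef
    have hcb : c < b := by rw [hcdef]; linarith
    have hca : a < c := by rw [hcdef]; linarith
    have hpc : 0 < (c - a) * (b - c) / (b - a) :=
      div_pos (mul_pos (by linarith) (by linarith)) (by linarith)
    obtain ⟨k, hk0, hkc⟩ := exists_small_inv hpc
    set t := (((k:ℝ) * (2 * π)))⁻¹ with htdef
    have hcont : ContinuousOn (fun w => (w - a) * (b - w) / (b - a)) (Set.Icc c b) :=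
      (((continuous_id.sub continuous_const).mul
        (continuous_const.sub continuous_id)).div_const (b - a)).continuousOn
    have htmem : t ∈ Set.Icc ((b - a) * (b - b) / (b - a)) ((c - a) * (b - c) / (b - a)) := by
      constructor
      · simp only [sub_self, mul_zero, zero_div]
        exact hk0.le
      · exact hkc.le
    obtain ⟨z, hz, hpz⟩ := intermediate_value_Icc' hcb.le hcont htmem
    have hpz' : (z - a) * (b - z) / (b - a) = t := hpz
    have hzb : z < b := by
      rcases eq_or_lt_of_le hz.2 with h | h
      · exfalso
        rw [h] at hpz'
        simp only [sub_self, mul_zero, zero_div] at hpz'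
        exact absurd hpz'.symm (ne_of_gt hk0)
      · exact h
    have hza : a < z := lt_of_lt_of_le hca hz.1
    have hda := (hasDerivAt_ff_Ioo V haV hb hE2 ⟨hza, hzb⟩).deriv
    rw [hpz', sin_inv_special, cos_inv_special] at hda
    have hq : (a + b - 2 * z) / (b - a) ≤ -(1/2 : ℝ) := by
      rw [div_le_iff₀ (by linarith)]
      have hzc : c ≤ z := hz.1
      rw [hcdef] at hzc
      linarith
    refine ⟨z, hzb, ?_, ?_⟩
    · have hzc : c ≤ z := hz.1
      rw [hcdef] at hzc
      linarith
    · have : deriv (ff V) z = -((a + b - 2 * z) / (b - a)) := by rw [hda]; ring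
      rw [this]
      linarith
  · have hE2 : Set.Iio b ∩ V = ∅ := by
      ext v
      simp only [Set.mem_inter_iff, Set.mem_Iio, Set.mem_empty_iff_false, iff_false, not_and]
      intro hvb hv
      rcases lt_or_ge v y with h | h
      · exact h1 ⟨v, hv, h.le⟩
      · have : v ∈ Set.Ico y b ∩ V := ⟨⟨h, hvb⟩, hv⟩
        rw [hE] at this; exact this
    obtain ⟨k, hk0, hkε⟩ := exists_small_inv hε
    set t := (((k:ℝ) * (2 * π)))⁻¹ with htdef
    refine ⟨b - t, by linarith, by simp only [sub_sub_cancel]; exact hkε, ?_⟩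
    have hda := (hasDerivAt_ff_Iio V hb hE2 (show b - t < b by linarith)).deriv
    rw [sub_sub_cancel, sin_inv_special, cos_inv_special] at hda
    rw [hda]
    norm_num


theorem stmt_9 (V : Set ℝ) (hV : IsClosed V) :
    ∃ f : ℝ → ℝ, Differentiable ℝ f ∧
      ∀ x ∈ V \ interior V, ¬ ContinuousAt (deriv f) x := by
  refine ⟨ff V, diff_ff V hV, ?_⟩
  rintro x ⟨hxV, hxI⟩ hcont
  have hd0 : deriv (ff V) x = 0 := (hasDerivAt_ff_mem V hxV).deriv
  have h2 : ∀ᶠ z in nhds x, |deriv (ff V) z| < 1/2 := by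
    have hc : Tendsto (deriv (ff V)) (nhds x) (nhds 0) := by
      rw [← hd0]; exact hcont
    have := hc (Metric.ball_mem_nhds 0 (by norm_num : (0:ℝ) < 1/2))
    filter_upwards [this] with z hz
    simpa [Real.dist_eq] using hz
  obtain ⟨r, hr, hball⟩ := Metric.eventually_nhds_iff_ball.mp h2
  apply hxI
  rw [mem_interior_iff_mem_nhds]
  apply Filter.mem_of_superset (Metric.ball_mem_nhds x (by positivity : 0 < r/8))
  intro y hy
  by_contra hyV
  have hyx : |y - x| < r / 8 := by
    rw [Metric.mem_ball, Real.dist_eq] at hy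
    exact hy
  rcases lt_or_ge x y with hxy | hyx'
  · -- y > x : oscillate just right of a := Af V y ∈ [x, y)
    have h1 : (V ∩ Set.Iic y).Nonempty := ⟨x, hxV, hxy.le⟩
    obtain ⟨haV, hay, hEa⟩ := left_endpoint V hV hyV h1
    have hxa : x ≤ Af V y := le_csSup (bddAbove_VIic V y) ⟨hxV, hxy.le⟩
    obtain ⟨z, hz1, hz2, hz3⟩ := osc_right V hV haV hay hEa (show (0:ℝ) < r/2 by linarith)
    have hax : Af V y - x < r / 8 := by
      have : Af V y - x ≤ y - x := by linarith
      calc Af V y - x ≤ y - x := this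
        _ ≤ |y - x| := le_abs_self _
        _ < r / 8 := hyx
    have hzb : |deriv (ff V) z| < 1/2 := by
      apply hball
      rw [Metric.mem_ball, Real.dist_eq, abs_of_nonneg (by linarith)]
      linarith
    rw [abs_lt] at hzb
    linarith [hzb.1]
  · -- y < x
    have hxy : y < x := lt_of_le_of_ne hyx' (fun h => hyV (h ▸ hxV))
    have h2' : (V ∩ Set.Ici y).Nonempty := ⟨x, hxV, hxy.le⟩
    obtain ⟨hbV, hyb, hEb⟩ := right_endpoint V hV hyV h2'
    have hbx : Bf V y ≤ x := csInf_le (bddBelow_VIci V y) ⟨hxV, hxy.le⟩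
    obtain ⟨z, hz1, hz2, hz3⟩ := osc_left V hV hbV hyb hEb (show (0:ℝ) < r/2 by linarith)
    have hbx' : x - Bf V y < r / 8 := by
      have : x - Bf V y ≤ x - y := by linarith
      calc x - Bf V y ≤ x - y := this
        _ ≤ |y - x| := by rw [abs_sub_comm]; exact le_abs_self _
        _ < r / 8 := hyx
    have hzb : |deriv (ff V) z| < 1/2 := by
      apply hball
      rw [Metric.mem_ball, Real.dist_eq, abs_of_nonpos (by linarith)]
      linarith
    rw [abs_lt] at hzb
    linarith [hzb.2]
end

section
/- Let g : ℝ → ℝ be differentiable with g(x) = 0 for all x ∉ (0, 1), and suppose there is a constant C > 0 with |g(z)| ≤ C · min(z, 1 − z) for all z ∈ [0, 1]. Let (qₙ)ₙ and (rₙ)ₙ be real sequences with qₙ < rₙ for all n and with the open intervals (qₙ, rₙ) pairwise disjoint. Define fₙ : ℝ → ℝ by fₙ(x) = 2⁻ⁿ · (rₙ − qₙ) · g((x − qₙ)/(rₙ − qₙ)), and define f : ℝ → ℝ by f(x) = Σₙ fₙ(x) (for each x at most one summand is nonzero, so the sum is well defined). Then f is differentiable at every point of ℝ; moreover f′(x)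 = 2⁻ⁿ · g′((x − qₙ)/(rₙ − qₙ)) for x ∈ (qₙ, rₙ), and f′(x) = 0 for every x not belonging to any interval (qₙ, rₙ). -/
open Set Filter Asymptotics Topology

theorem stmt_13 (g : ℝ → ℝ) (hg : Differentiable ℝ g)
    (hg0 : ∀ x : ℝ, x ∉ Ioo (0 : ℝ) 1 → g x = 0)
    (C : ℝ) (hC : 0 < C)
    (hbound : ∀ z ∈ Icc (0 : ℝ) 1, |g z| ≤ C * min z (1 - z))
    (q r : ℕ → ℝ) (hqr : ∀ n, q n < r n)
    (hdisj : ∀ m n, m ≠ n → Disjoint (Ioo (q m) (r m)) (Ioo (q n) (r n)))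
    (f : ℝ → ℝ)
    (hf : ∀ x : ℝ,
      f x = ∑' n : ℕ, ((2 : ℝ) ^ n)⁻¹ * (r n - q n) * g ((x - q n) / (r n - q n))) :
    Differentiable ℝ f ∧
    (∀ n : ℕ, ∀ x ∈ Ioo (q n) (r n),
      deriv f x = ((2 : ℝ) ^ n)⁻¹ * deriv g ((x - q n) / (r n - q n))) ∧
    (∀ x : ℝ, (∀ n : ℕ, x ∉ Ioo (q n) (r n)) → deriv f x = 0) := by
  have hpos : ∀ n, (0:ℝ) < r n - q n := fun n => sub_pos.2 (hqr n)
  set F : ℕ → ℝ → ℝ := fun n x => ((2:ℝ)^n)⁻¹ * (r n - q n) * g ((x - q n) / (r n - q n))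
    with hFdef
  have hf' : ∀ x, f x = ∑' n, F n x := by simp only [hFdef]; exact hf
  have hmem : ∀ n x, (x - q n)/(r n - q n) ∈ Ioo (0:ℝ) 1 ↔ x ∈ Ioo (q n) (r n) := by
    intro n x
    rw [mem_Ioo, mem_Ioo, lt_div_iff₀ (hpos n), zero_mul, div_lt_one (hpos n), sub_pos,
      sub_lt_sub_iff_right]
  have hFzero : ∀ n x, x ∉ Ioo (q n) (r n) → F n x = 0 := by
    intro n x hx
    have : g ((x - q n)/(r n - q n)) = 0 := hg0 _ (fun h => hx ((hmem n x).1 h))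
    simp [hFdef, this]
  have hnot : ∀ m n, m ≠ n → ∀ y, y ∈ Ioo (q n) (r n) → y ∉ Ioo (q m) (r m) :=
    fun m n h y hy => (Set.disjoint_right.1 (hdisj m n h)) hy
  have hf_eq : ∀ n x, x ∈ Ioo (q n) (r n) → f x = F n x := by
    intro n x hx
    rw [hf' x]
    exact tsum_eq_single n (fun m hm => hFzero m x (hnot m n hm x hx))
  have hf_zero : ∀ x, (∀ n, x ∉ Ioo (q n) (r n)) → f x = 0 := by
    intro x hx
    rw [hf' x]
    have : ∀ n, F n x = 0 := fun n => hFzero n x (hx n)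
    simp [this]
  -- derivative of g vanishes outside the open interval (including endpoints)
  have hderivg : ∀ z : ℝ, z ∉ Ioo (0:ℝ) 1 → deriv g z = 0 := by
    intro z hz
    have hgz : g z = 0 := hg0 z hz
    have hz' : z ≤ 0 ∨ 1 ≤ z := by
      rw [mem_Ioo] at hz; push_neg at hz
      rcases le_or_gt z 0 with h | h
      · exact Or.inl h
      · exact Or.inr (hz h)
    rcases hz' with h | h
    · have h1 : Tendsto (slope g z) (𝓝[<] z) (𝓝 (deriv g z)) :=
        (hasDerivAt_iff_tendsto_slope.1 (hg z).hasDerivAt).mono_left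
          (nhdsWithin_mono z (fun y hy => ne_of_lt hy))
      have h2 : Tendsto (slope g z) (𝓝[<] z) (𝓝 0) := by
        apply Tendsto.congr' _ tendsto_const_nhds
        filter_upwards [self_mem_nhdsWithin] with y hy
        have : g y = 0 := hg0 y (fun hmem => by
          have := hmem.1; have : y < z := hy; simp only [mem_Ioo] at hmem; linarith [hmem.1])
        simp [slope, this, hgz]
      exact tendsto_nhds_unique h1 h2
    · have h1 : Tendsto (slope g z) (𝓝[>] z) (𝓝 (deriv g z)) :=
        (hasDerivAt_iff_tendsto_slope.1 (hg z).hasDerivAt).mono_left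
          (nhdsWithin_mono z (fun y hy => ne_of_gt hy))
      have h2 : Tendsto (slope g z) (𝓝[>] z) (𝓝 0) := by
        apply Tendsto.congr' _ tendsto_const_nhds
        filter_upwards [self_mem_nhdsWithin] with y hy
        have : g y = 0 := hg0 y (fun hmem => by
          simp only [mem_Ioo] at hmem; have : z < y := hy; linarith [hmem.2])
        simp [slope, this, hgz]
      exact tendsto_nhds_unique h1 h2
  -- derivative of each piece
  have hFderiv : ∀ n x, HasDerivAt (F n)
      (((2:ℝ)^n)⁻¹ * deriv g ((x - q n)/(r n - q n))) x := by
    intro n x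
    have h1 : HasDerivAt (fun y => (y - q n)/(r n - q n)) ((r n - q n)⁻¹) x := by
      simpa [div_eq_mul_inv] using ((hasDerivAt_id x).sub_const (q n)).div_const (r n - q n)
    have h2 := ((hg ((x - q n)/(r n - q n))).hasDerivAt.comp x h1)
    have h3 := h2.const_mul (((2:ℝ)^n)⁻¹ * (r n - q n))
    have hne : r n - q n ≠ 0 := ne_of_gt (hpos n)
    convert h3 using 1
    · rfl
    · rfl
    · rfl
    · linear_combination (-(((2:ℝ)^n)⁻¹ * deriv g ((x - q n)/(r n - q n)))) * mul_inv_cancel₀ hne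
  have hF0 : ∀ n x, x ∉ Ioo (q n) (r n) → HasDerivAt (F n) 0 x := by
    intro n x hx
    have hz : (x - q n)/(r n - q n) ∉ Ioo (0:ℝ) 1 := fun h => hx ((hmem n x).1 h)
    have := hFderiv n x
    rwa [hderivg _ hz, mul_zero] at this
  -- inside case
  have hin : ∀ n, ∀ x ∈ Ioo (q n) (r n),
      HasDerivAt f (((2:ℝ)^n)⁻¹ * deriv g ((x - q n)/(r n - q n))) x := by
    intro n x hx
    have hloc : f =ᶠ[nhds x] F n :=
      Filter.eventuallyEq_of_mem (isOpen_Ioo.mem_nhds hx) (fun y hy => hf_eq n y hy)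
    exact (hFderiv n x).congr_of_eventuallyEq hloc
  -- outside case
  have hout : ∀ x, (∀ n, x ∉ Ioo (q n) (r n)) → HasDerivAt f 0 x := by
    intro x hx
    have hfx : f x = 0 := hf_zero x hx
    rw [hasDerivAt_iff_isLittleO]
    have heq : (fun y => f y - f x - (y - x) • (0:ℝ)) = fun y => f y := by
      funext y; simp [hfx]
    rw [heq, isLittleO_iff]
    intro ε hε
    obtain ⟨N, hN⟩ : ∃ N : ℕ, C * ((2:ℝ)^N)⁻¹ < ε := by
      obtain ⟨N, hN⟩ := exists_pow_lt_of_lt_one (div_pos hε hC)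
        (by norm_num : (2:ℝ)⁻¹ < 1)
      refine ⟨N, ?_⟩
      rw [inv_pow] at hN
      have := (lt_div_iff₀ hC).1 hN
      linarith [this]
    have hev : ∀ n ∈ Finset.range N, ∀ᶠ y in nhds x, |F n y| ≤ ε * |y - x| := by
      intro n _
      have h2 := hasDerivAt_iff_isLittleO.1 (hF0 n x (hx n))
      have h3 := isLittleO_iff.1 h2 hε
      filter_upwards [h3] with y hy
      simpa [hFzero n x (hx n), Real.norm_eq_abs] using hy
    have hev' : ∀ᶠ y in nhds x, ∀ n ∈ Finset.range N, |F n y| ≤ ε * |y - x| :=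
      (Filter.eventually_all_finset _).2 hev
    filter_upwards [hev'] with y hy
    rw [Real.norm_eq_abs, Real.norm_eq_abs]
    by_cases hc : ∃ n, y ∈ Ioo (q n) (r n)
    · obtain ⟨n, hn⟩ := hc
      rw [hf_eq n y hn]
      by_cases hnN : n < N
      · exact hy n (Finset.mem_range.2 hnN)
      · push_neg at hnN
        set z := (y - q n)/(r n - q n) with hzdef
        have hz : z ∈ Ioo (0:ℝ) 1 := (hmem n y).2 hn
        have hb := hbound z ⟨le_of_lt hz.1, le_of_lt hz.2⟩
        have hne : r n - q n ≠ 0 := ne_of_gt (hpos n)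
        have hzq : z * (r n - q n) = y - q n := by rw [hzdef, div_mul_cancel₀ _ hne]
        have h1z : (1 - z) * (r n - q n) = r n - y := by rw [sub_mul, hzq, one_mul]; ring
        have hminval : min z (1 - z) * (r n - q n) = min (y - q n) (r n - y) := by
          rw [min_mul_of_nonneg _ _ (le_of_lt (hpos n)), hzq, h1z]
        have hmin_le : min (y - q n) (r n - y) ≤ |y - x| := by
          have hxn := hx n
          rw [mem_Ioo] at hxn hn
          push_neg at hxn
          rcases le_or_gt x (q n) with h | h
          · have : y - q n ≤ y - x := by linarith
            calc min (y - q n) (r n - y) ≤ y - q n := min_le_left _ _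
              _ ≤ y - x := this
              _ ≤ |y - x| := le_abs_self _
          · have hrx : r n ≤ x := hxn h
            calc min (y - q n) (r n - y) ≤ r n - y := min_le_right _ _
              _ ≤ x - y := by linarith
              _ ≤ |x - y| := le_abs_self _
              _ = |y - x| := abs_sub_comm _ _
        have h2n : ((2:ℝ)^n)⁻¹ ≤ ((2:ℝ)^N)⁻¹ := by
          apply inv_anti₀ (by positivity)
          exact pow_le_pow_right₀ one_le_two hnN
        have habs : |F n y| = ((2:ℝ)^n)⁻¹ * ((r n - q n) * |g z|) := by
          rw [hFdef]
          simp only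
          rw [abs_mul, abs_mul, abs_of_pos (by positivity : (0:ℝ) < ((2:ℝ)^n)⁻¹),
            abs_of_pos (hpos n)]
          ring
        have hmin_nonneg : 0 ≤ min z (1 - z) := le_min (le_of_lt hz.1) (by linarith [hz.2])
        calc |F n y| = ((2:ℝ)^n)⁻¹ * ((r n - q n) * |g z|) := habs
          _ ≤ ((2:ℝ)^n)⁻¹ * ((r n - q n) * (C * min z (1 - z))) := by
              gcongr
              exact (hpos n).le
          _ = ((2:ℝ)^n)⁻¹ * C * (min z (1 - z) * (r n - q n)) := by ring
          _ = ((2:ℝ)^n)⁻¹ * C * min (y - q n) (r n - y) := by rw [hminval]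
          _ ≤ ((2:ℝ)^N)⁻¹ * C * |y - x| := by
              apply mul_le_mul _ hmin_le _ (by positivity)
              · exact mul_le_mul_of_nonneg_right h2n (le_of_lt hC)
              · have h0 : (0:ℝ) ≤ min (y - q n) (r n - y) := by
                  rw [mem_Ioo] at hn
                  exact le_min (by linarith [hn.1]) (by linarith [hn.2])
                exact h0
          _ ≤ ε * |y - x| := by
              apply mul_le_mul_of_nonneg_right _ (abs_nonneg _)
              linarith [hN]
    · push_neg at hc
      rw [hf_zero y hc]
      simp
      positivity
  refine ⟨?_, ?_, ?_⟩
  · intro x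
    by_cases hc : ∃ n, x ∈ Ioo (q n) (r n)
    · obtain ⟨n, hn⟩ := hc
      exact (hin n x hn).differentiableAt
    · push_neg at hc
      exact (hout x hc).differentiableAt
  · intro n x hx
    exact (hin n x hx).deriv
  · intro x hx
    exact (hout x hx).deriv
end
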